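/- Let n ≥ 2 and let m_1, ..., m_n be positive integers such that ∏_{j≠i} m_j ≥ 2 for every i ∈ {1,...,n}. Within the space ℝ^{n·m_1·...·m_n} of n-player games with strategy sets of sizes m_1, ..., m_n (parametrized by their payoff functions), the set of games whose correlated equilibrium polytope has affine dimension exactly m_1·...·m_n − 2 has Lebesgue measure zero. -/

import Mathlib

open scoped BigOperators

section Prelim

variable {S : Type} [Fintype S] [DecidableEq S]

/-- `σ` is a mixed strategy (probability distribution) on the finite set `S`. -/
def IsMixed (σ : S → ℝ) : Prop := (∀ s, 0 ≤ σ s) ∧ ∑ s, σ s = 1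

/-- The Dirac measure `δ_s`. -/
def dirac (s : S) : S → ℝ := fun d => if d = s then 1 else 0

/-- `α_i * σ_i`, the image of the mixed strategy `σ` under the deviation plan `αᵢ`,
where `αᵢ c d` is the probability `αᵢ(d | c)`. -/
def devImage (αᵢ : S → S → ℝ) (σ : S → ℝ) : S → ℝ := fun d => ∑ c, σ c * αᵢ c d

/-- `σ` is `αᵢ`-stationary: `αᵢ * σ = σ`. -/
def IsStationaryMixed (αᵢ : S → S → ℝ) (σ : S → ℝ) : Prop := devImage αᵢ σ = σ

/-- A nonempty `B ⊆ S` is `αᵢ`-absorbing if `supp (αᵢ * c) ⊆ B` for all `c ∈ B`. -/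
def IsAbsorbing (αᵢ : S → S → ℝ) (B : Finset S) : Prop :=
  B.Nonempty ∧ ∀ c ∈ B, ∀ d, 0 < αᵢ c d → d ∈ B

/-- A minimal absorbing set: an absorbing set containing no proper nonempty absorbing subset. -/
def IsMinimalAbsorbing (αᵢ : S → S → ℝ) (B : Finset S) : Prop :=
  IsAbsorbing αᵢ B ∧ ∀ B' ⊆ B, IsAbsorbing αᵢ B' → B' = B

/-- `C_i/α_i`: the set of `αᵢ`-stationary mixed strategies whose support is contained
in some minimal `αᵢ`-absorbing set. -/
def ReducedSet (αᵢ : S → S → ℝ) : Set (S → ℝ) :=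
  {σ | IsMixed σ ∧ IsStationaryMixed αᵢ σ ∧
    ∃ B : Finset S, IsMinimalAbsorbing αᵢ B ∧ ∀ s, σ s ≠ 0 → s ∈ B}

end Prelim

section Games

variable {N : Type} [Fintype N] [DecidableEq N]
  {C : N → Type} [∀ i, Fintype (C i)] [∀ i, DecidableEq (C i)]

/-- Marginal probability of the pure strategy `cᵢ` of player `i` under `μ`. -/
def marginal (μ : (∀ j, C j) → ℝ) (i : N) (cᵢ : C i) : ℝ :=
  ∑ c : ∀ j, C j, if c i = cᵢ then μ c else 0

/-- The incentive sum `∑_{c_{-i}} μ(c_{-i},cᵢ)[U_i(c_{-i},dᵢ) − U_i(c_{-i},cᵢ)]`. -/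
def incentiveSum (U : ∀ i : N, (∀ j, C j) → ℝ) (μ : (∀ j, C j) → ℝ) (i : N) (cᵢ dᵢ : C i) : ℝ :=
  ∑ c : ∀ j, C j, if c i = cᵢ then μ c * (U i (Function.update c i dᵢ) - U i c) else 0

/-- Correlated equilibrium. -/
def IsCorrelatedEq (U : ∀ i : N, (∀ j, C j) → ℝ) (μ : (∀ j, C j) → ℝ) : Prop :=
  (∀ c, 0 ≤ μ c) ∧ (∑ c : ∀ j, C j, μ c) = 1 ∧
    ∀ (i : N) (cᵢ dᵢ : C i), incentiveSum U μ i cᵢ dᵢ ≤ 0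

/-- Multilinear extension: payoff of player `i` under the mixed strategy profile `σ`. -/
def mixedPayoff (U : ∀ i : N, (∀ j, C j) → ℝ) (σ : ∀ j, C j → ℝ) (i : N) : ℝ :=
  ∑ c : ∀ j, C j, (∏ j, σ j (c j)) * U i c

/-- Nash equilibrium. -/
def IsNash (U : ∀ i : N, (∀ j, C j) → ℝ) (σ : ∀ j, C j → ℝ) : Prop :=
  (∀ i, IsMixed (σ i)) ∧
  ∀ (i : N) (dᵢ : C i),
    mixedPayoff U (Function.update σ i (dirac dᵢ)) i ≤ mixedPayoff U σ i

/-- `D(c, α) = ∑_i [U_i(c_{-i}, α_i * c_i) − U_i(c)]`. -/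
def devGain (U : ∀ i : N, (∀ j, C j) → ℝ) (α : ∀ i, C i → C i → ℝ) (c : ∀ j, C j) : ℝ :=
  ∑ i, ((∑ dᵢ, α i (c i) dᵢ * U i (Function.update c i dᵢ)) - U i c)

/-- A dual vector: a profile of deviation plans with `D(c,α) ≥ 0` for all `c`. -/
def IsDualVector (U : ∀ i : N, (∀ j, C j) → ℝ) (α : ∀ i, C i → C i → ℝ) : Prop :=
  (∀ (i : N) (cᵢ : C i), IsMixed (α i cᵢ)) ∧ ∀ c, 0 ≤ devGain U α c

/-- A strong dual vector: `D(c,α) > 0` whenever `c` has probability zero in all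
correlated equilibria. -/
def IsStrong (U : ∀ i : N, (∀ j, C j) → ℝ) (α : ∀ i, C i → C i → ℝ) : Prop :=
  ∀ c : ∀ j, C j, (∀ μ, IsCorrelatedEq U μ → μ c = 0) → 0 < devGain U α c

/-- A full dual vector: `α_i(dᵢ|cᵢ) > 0` whenever `β_i(dᵢ|cᵢ) > 0` for some dual vector `β`. -/
def IsFull (U : ∀ i : N, (∀ j, C j) → ℝ) (α : ∀ i, C i → C i → ℝ) : Prop :=
  ∀ (i : N) (cᵢ dᵢ : C i),
    (∃ β : ∀ i, C i → C i → ℝ, IsDualVector U β ∧ 0 < β i cᵢ dᵢ) → 0 < α i cᵢ dᵢ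

end Games


section PolyNull
open MeasureTheory MvPolynomial

theorem mv_null_fin : ∀ (k : ℕ) (p : MvPolynomial (Fin k) ℝ), p ≠ 0 →
    volume {x : Fin k → ℝ | eval x p = 0} = 0 := by
  intro k
  induction k with
  | zero =>
    intro p hp
    obtain ⟨a, rfl⟩ := MvPolynomial.C_surjective (Fin 0) p
    have ha : a ≠ 0 := fun h => hp (by rw [h, map_zero])
    have : {x : Fin 0 → ℝ | eval x (C a) = 0} = ∅ := by
      ext x; simp [ha]
    rw [this]; simp
  | succ k ih =>
    intro p hp
    set q := finSuccEquiv ℝ k p with hq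
    have hq0 : q ≠ 0 := by
      intro h
      exact hp ((finSuccEquiv ℝ k).injective (a₁ := p) (a₂ := 0) (by rw [map_zero, ← hq, h]))
    have hlc : q.leadingCoeff ≠ 0 := Polynomial.leadingCoeff_ne_zero.2 hq0
    set B : Set ((Fin k → ℝ) × ℝ) := {sy | eval (Fin.cons sy.2 sy.1) p = 0} with hB
    have hcontB : Continuous fun sy : (Fin k → ℝ) × ℝ =>
        eval (Fin.cons sy.2 sy.1 : Fin (k+1) → ℝ) p := by
      refine (MvPolynomial.continuous_eval p).comp ?_
      apply continuous_pi
      intro j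
      refine Fin.cases ?_ ?_ j
      · simpa using continuous_snd
      · intro j'
        simp only [Fin.cons_succ]; exact (continuous_apply j').comp continuous_fst
    have hBm : MeasurableSet B := hcontB.measurable (measurableSet_singleton 0)
    have key : (volume : Measure ((Fin k → ℝ) × ℝ)) B = 0 := by
      rw [show (volume : Measure ((Fin k → ℝ) × ℝ)) = (volume : Measure (Fin k → ℝ)).prod (volume : Measure ℝ) from rfl]
      rw [Measure.measure_prod_null hBm]
      have hsub : {s : Fin k → ℝ | ¬ (volume (Prod.mk s ⁻¹' B) = 0)} ⊆
          {s | eval s q.leadingCoeff = 0} := by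
        intro s hs
        by_contra hlc0
        apply hs
        have hmap : q.map (eval s) ≠ 0 := by
          intro h
          apply hlc0
          have h2 := Polynomial.coeff_map (eval s) q.natDegree (p := q)
          rw [h] at h2
          rw [Polynomial.leadingCoeff]
          rw [Polynomial.coeff_zero] at h2
          exact Set.mem_setOf.2 h2.symm
        have hsub2 : Prod.mk s ⁻¹' B ⊆ {y : ℝ | Polynomial.IsRoot (q.map (eval s)) y} := by
          intro y hy
          have hy2 : eval (Fin.cons y s : Fin (k+1) → ℝ) p = 0 := hy
          rwa [eval_eq_eval_mv_eval'] at hy2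
        exact measure_mono_null hsub2 ((Polynomial.finite_setOf_isRoot hmap).measure_zero _)
      have hae : ∀ᵐ s ∂(volume : Measure (Fin k → ℝ)), volume (Prod.mk s ⁻¹' B) = 0 :=
        ae_iff.2 (measure_mono_null hsub (ih q.leadingCoeff hlc))
      filter_upwards [hae] with s hs
      simpa using hs
    set A : Set (ℝ × (Fin k → ℝ)) := {ys | eval (Fin.cons ys.1 ys.2) p = 0} with hA
    have hcontA : Continuous fun ys : ℝ × (Fin k → ℝ) =>
        eval (Fin.cons ys.1 ys.2 : Fin (k+1) → ℝ) p := by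
      refine (MvPolynomial.continuous_eval p).comp ?_
      apply continuous_pi
      intro j
      refine Fin.cases ?_ ?_ j
      · simpa using continuous_fst
      · intro j'
        simp only [Fin.cons_succ]; exact (continuous_apply j').comp continuous_snd
    have hAm : MeasurableSet A := hcontA.measurable (measurableSet_singleton 0)
    have hAB : A = Prod.swap ⁻¹' B := by
      ext ys; simp [hA, hB, Set.mem_preimage, Prod.swap]
    have hAnull : (volume : Measure (ℝ × (Fin k → ℝ))) A = 0 := by
      rw [hAB]
      rw [show (volume : Measure (ℝ × (Fin k → ℝ))) = (volume : Measure ℝ).prod (volume : Measure (Fin k → ℝ)) from rfl]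
      rw [(Measure.measurePreserving_swap (μ := (volume : Measure ℝ)) (ν := (volume : Measure (Fin k → ℝ)))).measure_preimage
          hBm.nullMeasurableSet]
      exact key
    have e := volume_preserving_piFinSuccAbove (fun _ : Fin (k+1) => ℝ) 0
    have hZA : {x : Fin (k+1) → ℝ | eval x p = 0} =
        (MeasurableEquiv.piFinSuccAbove (fun _ : Fin (k+1) => ℝ) 0) ⁻¹' A := by
      ext x
      have hx : (Fin.cons (x 0) (fun j => x (Fin.succAbove 0 j)) : Fin (k+1) → ℝ) = x := by
        funext j
        refine Fin.cases ?_ ?_ j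
        · simp
        · intro j'; simp [Fin.succAbove_zero]
      simp only [Set.mem_preimage, Set.mem_setOf_eq, hA, MeasurableEquiv.piFinSuccAbove,
        MeasurableEquiv.coe_mk, Fin.insertNthEquiv, Equiv.coe_fn_symm_mk]
      rw [Fin.removeNth_zero, Fin.cons_self_tail]
    rw [hZA, e.measure_preimage hAm.nullMeasurableSet]
    exact hAnull

theorem mv_null {ι : Type} [Fintype ι] (p : MvPolynomial ι ℝ)
    (hp : ∃ x : ι → ℝ, eval x p ≠ 0) : volume {x : ι → ℝ | eval x p = 0} = 0 := by
  classical
  set N := Fintype.card ι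
  set e : ι ≃ Fin N := Fintype.equivFin ι with he
  set g := MeasurableEquiv.piCongrLeft (fun _ : ι => ℝ) e.symm with hg
  have hmp := volume_measurePreserving_piCongrLeft (fun _ : ι => ℝ) e.symm
  have hrn : (rename e) p ≠ 0 := by
    obtain ⟨x, hx⟩ := hp
    intro h
    apply hx
    have := congrArg (eval (x ∘ e.symm)) h
    rw [eval_rename, map_zero] at this
    rw [show ((x ∘ ⇑e.symm) ∘ ⇑e) = x from by funext j; simp] at this
    exact this
  have hS : MeasurableSet {x : ι → ℝ | eval x p = 0} :=
    (MvPolynomial.continuous_eval p).measurable (measurableSet_singleton 0)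
  have hpre : g ⁻¹' {x : ι → ℝ | eval x p = 0} =
      {y : Fin N → ℝ | eval y ((rename e) p) = 0} := by
    ext y
    simp only [Set.mem_preimage, Set.mem_setOf_eq, eval_rename]
    have : (g y : ι → ℝ) = y ∘ e := by
      funext b
      have h1 := Equiv.piCongrLeft_apply_apply (fun _ : ι => ℝ) e.symm y (e b)
      calc (g y : ι → ℝ) b = (Equiv.piCongrLeft (fun _ : ι => ℝ) e.symm) y (e.symm (e b)) := by
            rw [Equiv.symm_apply_apply]; rfl
        _ = y (e b) := h1
    rw [this]
  rw [← hmp.measure_preimage hS.nullMeasurableSet, hpre]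
  exact mv_null_fin N _ hrn

theorem func_null {ι : Type} [Fintype ι] (f : (ι → ℝ) → ℝ) (p : MvPolynomial ι ℝ)
    (hf : ∀ x, f x = eval x p) (hw : ∃ x, f x ≠ 0) :
    volume {x : ι → ℝ | f x = 0} = 0 := by
  have : {x : ι → ℝ | f x = 0} = {x | eval x p = 0} := by
    ext x; simp [hf]
  rw [this]
  exact mv_null p (by obtain ⟨x, hx⟩ := hw; exact ⟨x, by rwa [← hf]⟩)

theorem cylinder_null {N V : Type} [Fintype N] [MeasureSpace V] [SigmaFinite (volume : Measure V)]
    (i : N) (S : Set V) (hS : volume S = 0) :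
    volume {U : N → V | U i ∈ S} = 0 := by
  have : {U : N → V | U i ∈ S} = Function.eval i ⁻¹' S := rfl
  rw [this, MeasureTheory.volume_pi]
  exact MeasureTheory.Measure.pi_eval_preimage_null _ hS

end PolyNull

namespace CEDim

variable {N : Type} [Fintype N] [DecidableEq N]
  {C : N → Type} [∀ i, Fintype (C i)] [∀ i, DecidableEq (C i)]

/-- dot product of two vectors indexed by strategy profiles -/
def dot (u v : (∀ j, C j) → ℝ) : ℝ := ∑ c, u c * v c

def oneV : (∀ j, C j) → ℝ := fun _ => 1

/-- the coefficient vector of the incentive constraint -/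
def vecI (U : ∀ i : N, (∀ j, C j) → ℝ) (i : N) (cᵢ dᵢ : C i) : (∀ j, C j) → ℝ :=
  fun c => if c i = cᵢ then U i (Function.update c i dᵢ) - U i c else 0

lemma incentiveSum_eq_dot (U : ∀ i : N, (∀ j, C j) → ℝ) (μ : (∀ j, C j) → ℝ) (i : N)
    (cᵢ dᵢ : C i) : incentiveSum U μ i cᵢ dᵢ = dot (vecI U i cᵢ dᵢ) μ := by
  unfold incentiveSum dot vecI
  refine Finset.sum_congr rfl fun c _ => ?_
  split <;> ring

lemma dot_add_right (u a b : (∀ j, C j) → ℝ) : dot u (a + b) = dot u a + dot u b := by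
  unfold dot; rw [← Finset.sum_add_distrib]
  exact Finset.sum_congr rfl fun c _ => by simp [mul_add]

lemma dot_smul_right (u v : (∀ j, C j) → ℝ) (t : ℝ) : dot u (t • v) = t * dot u v := by
  unfold dot; rw [Finset.mul_sum]
  exact Finset.sum_congr rfl fun c _ => by simp; ring

lemma dot_sub_right (u a b : (∀ j, C j) → ℝ) : dot u (a - b) = dot u a - dot u b := by
  unfold dot; rw [← Finset.sum_sub_distrib]
  exact Finset.sum_congr rfl fun c _ => by simp [mul_sub]

lemma dot_add_left (a b v : (∀ j, C j) → ℝ) : dot (a + b) v = dot a v + dot b v := by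
  unfold dot; rw [← Finset.sum_add_distrib]
  exact Finset.sum_congr rfl fun c _ => by simp [add_mul]

lemma dot_smul_left (u v : (∀ j, C j) → ℝ) (t : ℝ) : dot (t • u) v = t * dot u v := by
  unfold dot; rw [Finset.mul_sum]
  exact Finset.sum_congr rfl fun c _ => by simp; ring

lemma dot_zero_left (v : (∀ j, C j) → ℝ) : dot (0 : (∀ j, C j) → ℝ) v = 0 := by
  unfold dot; simp

lemma dot_one_left (v : (∀ j, C j) → ℝ) : dot (oneV : (∀ j, C j) → ℝ) v = ∑ c, v c := by
  unfold dot oneV; simp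

lemma dot_dirac_left (c : ∀ j, C j) (v : (∀ j, C j) → ℝ) : dot (dirac c) v = v c := by
  unfold dot dirac
  rw [Finset.sum_eq_single c] <;> simp +contextual

lemma dot_dirac_right (u : (∀ j, C j) → ℝ) (c : ∀ j, C j) : dot u (dirac c) = u c := by
  unfold dot dirac
  rw [Finset.sum_eq_single c] <;> simp +contextual

lemma sum_dirac (c : ∀ j, C j) : ∑ x : ∀ j, C j, dirac c x = 1 := by
  unfold dirac
  rw [Finset.sum_eq_single c] <;> simp +contextual

lemma dirac_self (c : ∀ j, C j) : dirac c c = 1 := if_pos rfl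

lemma dirac_apply_ne {x c : ∀ j, C j} (h : x ≠ c) : dirac c x = 0 := if_neg h

lemma oneV_apply (x : ∀ j, C j) : (oneV : (∀ j, C j) → ℝ) x = 1 := rfl

lemma vecI_self (U : ∀ i : N, (∀ j, C j) → ℝ) (i : N) (cᵢ : C i) :
    vecI U i cᵢ cᵢ = 0 := by
  funext x
  unfold vecI
  rw [Pi.zero_apply]
  split
  · rename_i h; rw [← h, Function.update_eq_self]; ring
  · rfl

/-- tightness of the nonnegativity constraint at `c` -/
def tight0 (U : ∀ i : N, (∀ j, C j) → ℝ) (c : ∀ j, C j) : Prop :=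
  ∀ μ, IsCorrelatedEq U μ → μ c = 0

/-- tightness of the incentive constraint -/
def tight1 (U : ∀ i : N, (∀ j, C j) → ℝ) (i : N) (cᵢ dᵢ : C i) : Prop :=
  ∀ μ, IsCorrelatedEq U μ → incentiveSum U μ i cᵢ dᵢ = 0

lemma eps_bound {G : Type} [Fintype G] (a b : G → ℝ) (ha : ∀ g, 0 < a g) :
    ∃ t : ℝ, 0 < t ∧ ∀ g, 0 ≤ a g + t * b g := by
  classical
  set T : Finset ℝ := insert (1:ℝ) (Finset.univ.image fun g => a g / (|b g| + 1)) with hT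
  have hTne : T.Nonempty := ⟨1, Finset.mem_insert_self _ _⟩
  refine ⟨T.min' hTne, ?_, ?_⟩
  · apply (Finset.lt_min'_iff T hTne).2
    intro y hy
    rcases Finset.mem_insert.1 hy with h | h
    · rw [h]; norm_num
    · obtain ⟨g, _, rfl⟩ := Finset.mem_image.1 h
      exact div_pos (ha g) (by positivity)
  · intro g
    have hle : T.min' hTne ≤ a g / (|b g| + 1) :=
      Finset.min'_le _ _ (Finset.mem_insert.2 (Or.inr (Finset.mem_image.2 ⟨g, Finset.mem_univ g, rfl⟩)))
    have ht0 : 0 < T.min' hTne := by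
      apply (Finset.lt_min'_iff T hTne).2
      intro y hy
      rcases Finset.mem_insert.1 hy with h | h
      · rw [h]; norm_num
      · obtain ⟨g', _, rfl⟩ := Finset.mem_image.1 h
        exact div_pos (ha g') (by positivity)
    set t := T.min' hTne
    have h1 : t * (|b g| + 1) ≤ a g := by
      rw [← div_mul_cancel₀ (a g) (show (|b g| + 1) ≠ 0 by positivity)]
      exact mul_le_mul_of_nonneg_right hle (by positivity)
    have h2 : t * b g ≥ -(t * |b g|) := by
      have := neg_abs_le (b g)
      nlinarith [ht0.le]
    nlinarith [abs_nonneg (b g), ht0.le]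

variable {U : ∀ i : N, (∀ j, C j) → ℝ}

lemma pert {μ0 : (∀ j, C j) → ℝ} (hμ0 : IsCorrelatedEq U μ0)
    (hs : ∀ c, ¬ tight0 U c → 0 < μ0 c)
    (hi : ∀ (i : N) (cᵢ dᵢ : C i), ¬ tight1 U i cᵢ dᵢ → incentiveSum U μ0 i cᵢ dᵢ < 0)
    (v : (∀ j, C j) → ℝ) (h1 : ∑ c, v c = 0)
    (h2 : ∀ c, tight0 U c → 0 ≤ v c)
    (h3 : ∀ (i : N) (cᵢ dᵢ : C i), tight1 U i cᵢ dᵢ → dot (vecI U i cᵢ dᵢ) v ≤ 0) :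
    ∃ t : ℝ, 0 < t ∧ IsCorrelatedEq U (μ0 + t • v) := by
  classical
  set G := (∀ j, C j) ⊕ (Σ i : N, C i × C i) with hG
  set a : G → ℝ := fun g => match g with
    | Sum.inl c => if tight0 U c then 1 else μ0 c
    | Sum.inr ⟨i, ci, di⟩ => if tight1 U i ci di then 1 else -incentiveSum U μ0 i ci di
  set b : G → ℝ := fun g => match g with
    | Sum.inl c => if tight0 U c then 0 else v c
    | Sum.inr ⟨i, ci, di⟩ => if tight1 U i ci di then 0 else -dot (vecI U i ci di) v
  have ha : ∀ g, 0 < a g := by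
    rintro (c | ⟨i, ci, di⟩)
    · simp only [a]; split
      · norm_num
      · exact hs c (by assumption)
    · simp only [a]; split
      · norm_num
      · have := hi i ci di (by assumption); linarith
  obtain ⟨t, ht, hb⟩ := eps_bound a b ha
  refine ⟨t, ht, ?_, ?_, ?_⟩
  · intro c
    rw [Pi.add_apply, Pi.smul_apply, smul_eq_mul]
    by_cases hc : tight0 U c
    · have := hc μ0 hμ0
      have := h2 c hc
      nlinarith
    · have := hb (Sum.inl c)
      simp only [a, b, if_neg hc] at this
      linarith
  · have : ∑ c, (μ0 + t • v) c = ∑ c, μ0 c + t * ∑ c, v c := by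
      rw [Finset.mul_sum, ← Finset.sum_add_distrib]
      exact Finset.sum_congr rfl fun c _ => by simp
    rw [this, hμ0.2.1, h1]; ring
  · intro i ci di
    rw [incentiveSum_eq_dot, dot_add_right, dot_smul_right, ← incentiveSum_eq_dot]
    by_cases he : tight1 U i ci di
    · have h0 := he μ0 hμ0
      have hd := h3 i ci di he
      nlinarith
    · have := hb (Sum.inr ⟨i, ci, di⟩)
      simp only [a, b, if_neg he] at this
      linarith

lemma exists_interior [Nonempty (∀ j, C j)] (hne : ∃ μ, IsCorrelatedEq U μ) :
    ∃ μ0, IsCorrelatedEq U μ0 ∧ (∀ c, ¬ tight0 U c → 0 < μ0 c) ∧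
      (∀ (i : N) (cᵢ dᵢ : C i), ¬ tight1 U i cᵢ dᵢ → incentiveSum U μ0 i cᵢ dᵢ < 0) := by
  classical
  obtain ⟨μstar, hμstar⟩ := hne
  set G := (∀ j, C j) ⊕ (Σ i : N, C i × C i) with hG
  have hGne : Nonempty G := ⟨Sum.inl (Classical.arbitrary _)⟩
  -- witnesses
  have hw0 : ∀ c : ∀ j, C j, ¬ tight0 U c → ∃ μ, IsCorrelatedEq U μ ∧ 0 < μ c := by
    intro c hc
    unfold tight0 at hc
    push_neg at hc
    obtain ⟨μ, hμ, hne0⟩ := hc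
    exact ⟨μ, hμ, lt_of_le_of_ne (hμ.1 c) (Ne.symm hne0)⟩
  have hw1 : ∀ (i : N) (ci di : C i), ¬ tight1 U i ci di →
      ∃ μ, IsCorrelatedEq U μ ∧ incentiveSum U μ i ci di < 0 := by
    intro i ci di hc
    unfold tight1 at hc
    push_neg at hc
    obtain ⟨μ, hμ, hne0⟩ := hc
    exact ⟨μ, hμ, lt_of_le_of_ne (hμ.2.2 i ci di) hne0⟩
  set w : G → ((∀ j, C j) → ℝ) := fun g => match g with
    | Sum.inl c => if h : tight0 U c then μstar else (hw0 c h).choose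
    | Sum.inr ⟨i, ci, di⟩ => if h : tight1 U i ci di then μstar else (hw1 i ci di h).choose
  have hwCE : ∀ g, IsCorrelatedEq U (w g) := by
    rintro (c | ⟨i, ci, di⟩)
    · simp only [w]; split
      · exact hμstar
      · exact (hw0 c (by assumption)).choose_spec.1
    · simp only [w]; split
      · exact hμstar
      · exact (hw1 i ci di (by assumption)).choose_spec.1
  have hwpos : ∀ c : ∀ j, C j, ¬ tight0 U c → 0 < w (Sum.inl c) c := by
    intro c hc
    simp only [w, dif_neg hc]
    exact (hw0 c hc).choose_spec.2
  have hwneg : ∀ (i : N) (ci di : C i), ¬ tight1 U i ci di →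
      incentiveSum U (w (Sum.inr ⟨i, ci, di⟩)) i ci di < 0 := by
    intro i ci di hc
    simp only [w, dif_neg hc]
    exact (hw1 i ci di hc).choose_spec.2
  set K := Fintype.card G with hK
  have hK0 : 0 < K := Fintype.card_pos
  have hKR : (0:ℝ) < (K:ℝ) := by exact_mod_cast hK0
  refine ⟨(K:ℝ)⁻¹ • ∑ g : G, w g, ⟨?_, ?_, ?_⟩, ?_, ?_⟩
  · intro c
    rw [Pi.smul_apply, Finset.sum_apply, smul_eq_mul]
    have : 0 ≤ ∑ g : G, w g c := Finset.sum_nonneg fun g _ => (hwCE g).1 c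
    positivity
  · have e0 : ∑ c, ((K:ℝ)⁻¹ • ∑ g : G, w g) c = ∑ c, (K:ℝ)⁻¹ * ∑ g : G, w g c :=
      Finset.sum_congr rfl fun c _ => by rw [Pi.smul_apply, Finset.sum_apply, smul_eq_mul]
    have : ∑ c, ((K:ℝ)⁻¹ • ∑ g : G, w g) c = (K:ℝ)⁻¹ * ∑ g : G, ∑ c, w g c := by
      rw [e0, ← Finset.mul_sum, Finset.sum_comm]
    rw [this]
    have : ∑ g : G, ∑ c, w g c = (K:ℝ) := by
      rw [show ∑ g : G, ∑ c, w g c = ∑ g : G, (1:ℝ) from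
        Finset.sum_congr rfl fun g _ => (hwCE g).2.1]
      simp [hK]
    rw [this]
    field_simp
  · intro i ci di
    rw [incentiveSum_eq_dot, dot_smul_right]
    have : dot (vecI U i ci di) (∑ g : G, w g) = ∑ g : G, dot (vecI U i ci di) (w g) := by
      unfold dot
      rw [Finset.sum_comm]
      exact Finset.sum_congr rfl fun c _ => by
        rw [Finset.sum_apply, Finset.mul_sum]
    rw [this]
    have hsum : ∑ g : G, dot (vecI U i ci di) (w g) ≤ 0 :=
      Finset.sum_nonpos fun g _ => by
        rw [← incentiveSum_eq_dot]; exact (hwCE g).2.2 i ci di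
    have : (0:ℝ) ≤ (K:ℝ)⁻¹ := by positivity
    nlinarith
  · intro c hc
    rw [Pi.smul_apply, Finset.sum_apply, smul_eq_mul]
    have h1 : w (Sum.inl c) c ≤ ∑ g : G, w g c :=
      Finset.single_le_sum (f := fun g => w g c) (fun g _ => (hwCE g).1 c)
        (Finset.mem_univ (Sum.inl c))
    have h2 := hwpos c hc
    have : 0 < ∑ g : G, w g c := lt_of_lt_of_le h2 h1
    positivity
  · intro i ci di hc
    rw [incentiveSum_eq_dot, dot_smul_right]
    have hrw : dot (vecI U i ci di) (∑ g : G, w g) = ∑ g : G, dot (vecI U i ci di) (w g) := by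
      unfold dot
      rw [Finset.sum_comm]
      exact Finset.sum_congr rfl fun c _ => by
        rw [Finset.sum_apply, Finset.mul_sum]
    rw [hrw]
    have hstrict : ∑ g : G, dot (vecI U i ci di) (w g) < 0 := by
      have hle : ∀ g ∈ Finset.univ (α := G), dot (vecI U i ci di) (w g) ≤ (fun _ => (0:ℝ)) g :=
        fun g _ => by rw [← incentiveSum_eq_dot]; exact (hwCE g).2.2 i ci di
      have hlt : ∃ g ∈ Finset.univ (α := G), dot (vecI U i ci di) (w g) < (fun _ => (0:ℝ)) g :=
        ⟨Sum.inr ⟨i, ci, di⟩, Finset.mem_univ _, by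
          rw [← incentiveSum_eq_dot]; exact hwneg i ci di hc⟩
      have := Finset.sum_lt_sum hle hlt
      simpa using this
    have hKinv : (0:ℝ) < (K:ℝ)⁻¹ := by positivity
    nlinarith

open Module

def Wsub (U : ∀ i : N, (∀ j, C j) → ℝ) : Submodule ℝ ((∀ j, C j) → ℝ) where
  carrier := {v | (∑ c, v c) = 0 ∧ (∀ c, tight0 U c → v c = 0) ∧
    ∀ (i : N) (ci di : C i), tight1 U i ci di → dot (vecI U i ci di) v = 0}
  add_mem' := by
    rintro a b ⟨ha1, ha2, ha3⟩ ⟨hb1, hb2, hb3⟩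
    refine ⟨?_, ?_, ?_⟩
    · rw [show ∑ c, (a + b) c = ∑ c, a c + ∑ c, b c by
        rw [← Finset.sum_add_distrib]; exact Finset.sum_congr rfl fun c _ => rfl, ha1, hb1]
      ring
    · intro c hc; rw [Pi.add_apply, ha2 c hc, hb2 c hc]; ring
    · intro i ci di h; rw [dot_add_right, ha3 i ci di h, hb3 i ci di h]; ring
  zero_mem' := by
    refine ⟨by simp, fun c _ => rfl, fun i ci di _ => ?_⟩
    have : (0 : (∀ j, C j) → ℝ) = (0:ℝ) • (0 : (∀ j, C j) → ℝ) := by simp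
    rw [this, dot_smul_right]; ring
  smul_mem' := by
    rintro t a ⟨ha1, ha2, ha3⟩
    refine ⟨?_, ?_, ?_⟩
    · rw [show ∑ c, (t • a) c = t * ∑ c, a c by
        rw [Finset.mul_sum]; exact Finset.sum_congr rfl fun c _ => by simp, ha1]
      ring
    · intro c hc; rw [Pi.smul_apply, ha2 c hc]; simp
    · intro i ci di h; rw [dot_smul_right, ha3 i ci di h]; ring

def FF (U : ∀ i : N, (∀ j, C j) → ℝ) : Set ((∀ j, C j) → ℝ) :=
  insert oneV ({w | ∃ c, tight0 U c ∧ w = dirac c} ∪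
    {w | ∃ (i : N) (ci di : C i), tight1 U i ci di ∧ w = vecI U i ci di})

lemma vectorSpan_eq_Wsub {μ0 : (∀ j, C j) → ℝ} (hμ0 : IsCorrelatedEq U μ0)
    (hs : ∀ c, ¬ tight0 U c → 0 < μ0 c)
    (hi : ∀ (i : N) (cᵢ dᵢ : C i), ¬ tight1 U i cᵢ dᵢ → incentiveSum U μ0 i cᵢ dᵢ < 0) :
    vectorSpan ℝ {μ | IsCorrelatedEq U μ} = Wsub U := by
  apply le_antisymm
  · rw [vectorSpan_def]
    apply Submodule.span_le.2
    rintro x hx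
    rw [Set.mem_vsub] at hx
    obtain ⟨μ, hμ, ν, hν, rfl⟩ := hx
    rw [vsub_eq_sub]
    refine ⟨?_, ?_, ?_⟩
    · rw [show ∑ c, (μ - ν) c = ∑ c, μ c - ∑ c, ν c by
        rw [← Finset.sum_sub_distrib]; exact Finset.sum_congr rfl fun c _ => rfl,
        hμ.2.1, hν.2.1]
      ring
    · intro c hc; rw [Pi.sub_apply, hc μ hμ, hc ν hν]; ring
    · intro i ci di h
      rw [dot_sub_right, ← incentiveSum_eq_dot, ← incentiveSum_eq_dot, h μ hμ, h ν hν]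
      ring
  · intro v hv
    obtain ⟨hv1, hv2, hv3⟩ := hv
    obtain ⟨t, ht, hCE⟩ := pert hμ0 hs hi v hv1 (fun c hc => le_of_eq (hv2 c hc).symm)
      (fun i ci di h => le_of_eq (hv3 i ci di h))
    have hmem : (μ0 + t • v) -ᵥ μ0 ∈
        ({μ | IsCorrelatedEq U μ} -ᵥ {μ | IsCorrelatedEq U μ} : Set _) :=
      Set.vsub_mem_vsub hCE hμ0
    rw [vsub_eq_sub, add_sub_cancel_left] at hmem
    have : v = t⁻¹ • (t • v) := by rw [smul_smul, inv_mul_cancel₀ ht.ne', one_smul]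
    rw [vectorSpan_def, this]
    exact Submodule.smul_mem _ _ (Submodule.subset_span hmem)

lemma finrank_span_FF (hW : finrank ℝ (Wsub U) = Fintype.card (∀ j, C j) - 2)
    (hM : 4 ≤ Fintype.card (∀ j, C j)) :
    finrank ℝ (Submodule.span ℝ (FF U)) = 2 := by
  classical
  set L : ((∀ j, C j) → ℝ) ≃ₗ[ℝ] EuclideanSpace ℝ (∀ j, C j) :=
    (WithLp.linearEquiv 2 ℝ ((∀ j, C j) → ℝ)).symm with hL
  have hinner : ∀ (u v : (∀ j, C j) → ℝ),
      (inner ℝ (L u) (L v) : ℝ) = dot u v := by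
    intro u v
    rw [PiLp.inner_apply]
    unfold dot
    refine Finset.sum_congr rfl fun c _ => ?_
    rw [RCLike.inner_apply]
    rw [show (starRingEnd ℝ) (L u c) = L u c from by simp [starRingEnd_apply]]
    exact mul_comm _ _
  have horth : ((Submodule.span ℝ (FF U)).map L.toLinearMap)ᗮ
      = (Wsub U).map L.toLinearMap := by
    ext x
    constructor
    · intro hx
      rw [Submodule.mem_orthogonal] at hx
      refine ⟨L.symm x, ⟨?_, ?_, ?_⟩, by simp⟩
      · have h := hx (L oneV)
          (Submodule.mem_map_of_mem (Submodule.subset_span (Set.mem_insert _ _)))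
        have hx' : (inner ℝ (L oneV) (L (L.symm x)) : ℝ) = 0 := by
          rw [LinearEquiv.apply_symm_apply]; exact h
        rw [hinner, dot_one_left] at hx'
        exact hx'
      · intro c hc
        have h := hx (L (dirac c))
          (Submodule.mem_map_of_mem (Submodule.subset_span
            (Set.mem_insert_of_mem _ (Or.inl ⟨c, hc, rfl⟩))))
        have hx' : (inner ℝ (L (dirac c)) (L (L.symm x)) : ℝ) = 0 := by
          rw [LinearEquiv.apply_symm_apply]; exact h
        rw [hinner, dot_dirac_left] at hx'
        exact hx'
      · intro i ci di h1
        have h := hx (L (vecI U i ci di))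
          (Submodule.mem_map_of_mem (Submodule.subset_span
            (Set.mem_insert_of_mem _ (Or.inr ⟨i, ci, di, h1, rfl⟩))))
        have hx' : (inner ℝ (L (vecI U i ci di)) (L (L.symm x)) : ℝ) = 0 := by
          rw [LinearEquiv.apply_symm_apply]; exact h
        rw [hinner] at hx'
        exact hx'
    · rintro ⟨v, hv, rfl⟩
      rw [Submodule.mem_orthogonal]
      intro u hu
      rw [Submodule.map_span] at hu
      induction hu using Submodule.span_induction with
      | mem u hu =>
        obtain ⟨u', hu', rfl⟩ := hu
        rw [show (L.toLinearMap u' : EuclideanSpace ℝ (∀ j, C j)) = L u' from rfl,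
          show (L.toLinearMap v : EuclideanSpace ℝ (∀ j, C j)) = L v from rfl, hinner u' v]
        rcases Set.mem_insert_iff.1 hu' with h | h
        · rw [h, dot_one_left]; exact hv.1
        · rcases (Set.mem_union _ _ _).1 h with ⟨c, hc, rfl⟩ | ⟨i, ci, di, h1, rfl⟩
          · rw [dot_dirac_left]; exact hv.2.1 c hc
          · exact hv.2.2 i ci di h1
      | zero => rw [inner_zero_left]
      | add a b _ _ ha hb => rw [inner_add_left, ha, hb]; ring
      | smul r a _ ha => rw [inner_smul_left, ha]; simp
  have h1 := Submodule.finrank_add_finrank_orthogonal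
    ((Submodule.span ℝ (FF U)).map L.toLinearMap)
  rw [horth] at h1
  rw [LinearEquiv.finrank_map_eq, LinearEquiv.finrank_map_eq, hW,
    finrank_euclideanSpace] at h1
  omega

lemma triple_dep (Φ : Submodule ℝ ((∀ j, C j) → ℝ)) (hΦ : finrank ℝ Φ = 2)
    {u v w : (∀ j, C j) → ℝ} (hu : u ∈ Φ) (hv : v ∈ Φ) (hw : w ∈ Φ) :
    ∃ a b c : ℝ, ¬(a = 0 ∧ b = 0 ∧ c = 0) ∧ a • u + b • v + c • w = 0 := by
  classical
  by_cases hli : LinearIndependent ℝ ![u, v, w]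
  · exfalso
    have hr : Set.range ![u, v, w] ⊆ (Φ : Set _) := by
      rintro x ⟨i, rfl⟩
      fin_cases i <;> simpa using (by assumption)
    have hle : Submodule.span ℝ (Set.range ![u, v, w]) ≤ Φ := Submodule.span_le.2 hr
    have h3 := finrank_span_eq_card hli
    have := Submodule.finrank_mono hle
    simp only [h3, hΦ, Fintype.card_fin] at this
    omega
  · rw [Fintype.not_linearIndependent_iff] at hli
    obtain ⟨g, hg, i, hi⟩ := hli
    refine ⟨g 0, g 1, g 2, ?_, ?_⟩
    · rintro ⟨h0, h1, h2⟩
      fin_cases i <;> simp_all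
    · have := hg
      rw [Fin.sum_univ_three] at this
      simpa using this

theorem main_cover [Nonempty N] [∀ i, Nonempty (C i)]
    (hb : ∀ i : N, ∃ j, j ≠ i ∧ 2 ≤ Fintype.card (C j))
    (hdim : finrank ℝ (vectorSpan ℝ {μ : (∀ j, C j) → ℝ | IsCorrelatedEq U μ})
      = Fintype.card (∀ j, C j) - 2) :
    (∃ (i : N) (a b : ∀ j, C j), a ≠ b ∧ U i a = U i b) ∨
    (∃ (i : N) (a b c d e f : ∀ j, C j),
      (a ≠ b ∧ a ≠ d ∧ a ≠ e ∧ a ≠ f ∧ c ≠ b ∧ c ≠ d ∧ c ≠ e ∧ c ≠ f) ∧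
      (U i a - U i b) * (U i c - U i d) = (U i e - U i d) * (U i f - U i b)) := by
  classical
  have hM : 4 ≤ Fintype.card (∀ j, C j) := by
    obtain ⟨j0, _, hj0⟩ := hb (Classical.arbitrary N)
    obtain ⟨j1, hne, hj1⟩ := hb j0
    rw [Fintype.card_pi]
    calc (4:ℕ) ≤ Fintype.card (C j0) * Fintype.card (C j1) := by nlinarith
      _ = ∏ j ∈ ({j0, j1} : Finset N), Fintype.card (C j) :=
          (Finset.prod_pair (f := fun j => Fintype.card (C j)) (Ne.symm hne)).symm
      _ ≤ ∏ j, Fintype.card (C j) :=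
          Finset.prod_le_prod_of_subset_of_one_le' (Finset.subset_univ _)
            (fun j _ _ => Fintype.card_pos)
  have hP : ∃ μ, IsCorrelatedEq U μ := by
    by_contra h
    push_neg at h
    have hemp : {μ : (∀ j, C j) → ℝ | IsCorrelatedEq U μ} = ∅ := by
      ext μ; simp [h μ]
    rw [hemp, vectorSpan_empty] at hdim
    rw [finrank_bot] at hdim
    omega
  obtain ⟨μ0, hμ0, hs0, hi0⟩ := exists_interior hP
  have hWdim : finrank ℝ (Wsub U) = Fintype.card (∀ j, C j) - 2 := by
    rw [← vectorSpan_eq_Wsub hμ0 hs0 hi0]; exact hdim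
  have hΦ2 := finrank_span_FF hWdim hM
  have honeΦ : oneV ∈ Submodule.span ℝ (FF U) :=
    Submodule.subset_span (Set.mem_insert _ _)
  have hδΦ : ∀ c, tight0 U c → dirac c ∈ Submodule.span ℝ (FF U) := fun c hc =>
    Submodule.subset_span (Set.mem_insert_of_mem _ (Or.inl ⟨c, hc, rfl⟩))
  have hvΦ : ∀ (i : N) (ci di : C i), tight1 U i ci di →
      vecI U i ci di ∈ Submodule.span ℝ (FF U) := fun i ci di h =>
    Submodule.subset_span (Set.mem_insert_of_mem _ (Or.inr ⟨i, ci, di, h, rfl⟩))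
  have hex_ne : ∀ x : (∀ j, C j), ∃ y, y ≠ x := fun x =>
    Fintype.exists_ne_of_one_lt_card (by omega) x
  have hthird : ∀ x y : (∀ j, C j), ∃ z, z ≠ x ∧ z ≠ y := by
    intro x y
    have h2 : ({x, y} : Finset (∀ j, C j)).card ≤ 2 :=
      le_trans (Finset.card_insert_le _ _) (by simp)
    have hsd : 1 ≤ ((Finset.univ : Finset (∀ j, C j)) \ {x, y}).card := by
      have := Finset.le_card_sdiff ({x, y} : Finset (∀ j, C j)) Finset.univ
      rw [Finset.card_univ] at this
      omega
    have hpos : 0 < ((Finset.univ : Finset (∀ j, C j)) \ {x, y}).card := by omega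
    obtain ⟨z, hz⟩ := Finset.card_pos.1 hpos
    rw [Finset.mem_sdiff, Finset.mem_insert, Finset.mem_singleton] at hz
    exact ⟨z, fun h => hz.2 (Or.inl h), fun h => hz.2 (Or.inr h)⟩
  have hsum1 : ∑ c, μ0 c = 1 := hμ0.2.1
  by_cases hZ : ∃ c0, tight0 U c0
  · -- some nonnegativity constraint is tight
    obtain ⟨c0, hc0⟩ := hZ
    have hμ0c0 : μ0 c0 = 0 := hc0 μ0 hμ0
    have hZuniq : ∀ c', tight0 U c' → c' = c0 := by
      intro c' hc'
      by_contra hne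
      obtain ⟨a, b, g, hnt, heq⟩ := triple_dep _ hΦ2 honeΦ (hδΦ c0 hc0) (hδΦ c' hc')
      obtain ⟨z, hz0, hz'⟩ := hthird c0 c'
      have e1 := congrFun heq z
      have e2 := congrFun heq c0
      have e3 := congrFun heq c'
      simp only [Pi.add_apply, Pi.smul_apply, smul_eq_mul, Pi.zero_apply, oneV_apply] at e1 e2 e3
      rw [dirac_apply_ne hz0, dirac_apply_ne hz'] at e1
      rw [dirac_self, dirac_apply_ne (Ne.symm hne)] at e2
      rw [dirac_apply_ne hne, dirac_self] at e3
      exact hnt ⟨by linarith, by linarith, by linarith⟩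
    have claim1 : ∀ (i : N) (ci di : C i), tight1 U i ci di →
        vecI U i ci di = (vecI U i ci di c0) • dirac c0 := by
      intro i ci di ht
      obtain ⟨a, b, g, hnt, heq⟩ := triple_dep _ hΦ2 honeΦ (hδΦ c0 hc0) (hvΦ i ci di ht)
      have hg : g ≠ 0 := by
        intro hg0
        obtain ⟨z, hz⟩ := hex_ne c0
        have e1 := congrFun heq z
        have e2 := congrFun heq c0
        simp only [Pi.add_apply, Pi.smul_apply, smul_eq_mul, Pi.zero_apply, oneV_apply,
          hg0, zero_mul, add_zero, mul_one] at e1 e2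
        rw [dirac_apply_ne hz] at e1
        rw [dirac_self] at e2
        exact hnt ⟨by linarith, by linarith, hg0⟩
      have hdμ := congrArg (fun u => dot u μ0) heq
      simp only [dot_add_left, dot_smul_left, dot_zero_left, dot_one_left, hsum1,
        dot_dirac_left, hμ0c0] at hdμ
      rw [show dot (vecI U i ci di) μ0 = 0 from by
        rw [← incentiveSum_eq_dot]; exact ht μ0 hμ0] at hdμ
      have ha : a = 0 := by linarith
      funext x
      have ex := congrFun heq x
      have ec0 := congrFun heq c0
      simp only [Pi.add_apply, Pi.smul_apply, smul_eq_mul, Pi.zero_apply, oneV_apply, ha,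
        zero_mul, zero_add, mul_one] at ex ec0
      rw [dirac_self] at ec0
      rw [Pi.smul_apply, smul_eq_mul]
      by_cases hx : x = c0
      · subst hx
        rw [dirac_self]; ring
      · rw [dirac_apply_ne hx] at ex
        rw [dirac_apply_ne hx]
        rw [mul_zero] at ex ⊢
        rw [zero_add] at ex
        rcases mul_eq_zero.1 ex with h | h
        · exact absurd h hg
        · exact h
    by_cases hpos : ∃ (i : N) (ci di : C i), tight1 U i ci di ∧ 0 < vecI U i ci di c0
    · obtain ⟨i, ci, di, ht, hbp⟩ := hpos
      have hveq := claim1 i ci di ht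
      have hslice : c0 i = ci := by
        by_contra h
        have h0 : vecI U i ci di c0 = 0 := by unfold vecI; rw [if_neg h]
        rw [h0] at hbp; exact lt_irrefl 0 hbp
      have hdc : di ≠ ci := by
        intro h
        rw [h, vecI_self] at hbp
        simp at hbp
      obtain ⟨j, hji, hcj⟩ := hb i
      obtain ⟨s, hs⟩ := Fintype.exists_ne_of_one_lt_card (by omega) (c0 j)
      have hx1i : Function.update c0 j s i = c0 i := Function.update_of_ne (Ne.symm hji) _ _
      have hx1ne : Function.update c0 j s ≠ c0 := by
        intro h
        apply hs
        have := congrFun h j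
        rwa [Function.update_self] at this
      have h1 : vecI U i ci di (Function.update c0 j s) =
          U i (Function.update (Function.update c0 j s) i di) - U i (Function.update c0 j s) := by
        unfold vecI; rw [if_pos (by rw [hx1i, hslice])]
      have h2 : vecI U i ci di (Function.update c0 j s) = 0 := by
        rw [hveq, Pi.smul_apply, smul_eq_mul, dirac_apply_ne hx1ne]; ring
      left
      refine ⟨i, Function.update (Function.update c0 j s) i di, Function.update c0 j s, ?_, ?_⟩
      · intro h
        have := congrFun h i
        rw [Function.update_self] at this
        exact hdc (by rw [this, hx1i, hslice])
      · linarith [h1, h2]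
    · exfalso
      push_neg at hpos
      obtain ⟨c1, hc1⟩ := hex_ne c0
      set v : (∀ j, C j) → ℝ := fun x => dirac c0 x - dirac c1 x with hv
      have hvc0 : v c0 = 1 := by
        show dirac c0 c0 - dirac c1 c0 = 1
        rw [dirac_self, dirac_apply_ne (Ne.symm hc1)]; ring
      have hdotv : ∀ u : (∀ j, C j) → ℝ, dot u v = u c0 - u c1 := by
        intro u
        have : v = dirac c0 - dirac c1 := rfl
        rw [this, dot_sub_right, dot_dirac_right, dot_dirac_right]
      obtain ⟨t, ht, hCE⟩ := pert hμ0 hs0 hi0 v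
        (by
          have hss : ∑ c, v c = ∑ c, dirac c0 c - ∑ c, dirac c1 c := by
            rw [← Finset.sum_sub_distrib]
          rw [hss, sum_dirac, sum_dirac]
          ring)
        (by
          intro c hc
          rw [hZuniq c hc, hvc0]; norm_num)
        (by
          intro i ci di hti
          rw [claim1 i ci di hti, dot_smul_left, hdotv]
          have h1 : dirac c0 c0 - dirac c0 c1 = 1 := by
            rw [dirac_self, dirac_apply_ne hc1]; ring
          rw [h1, mul_one]
          exact hpos i ci di hti)
      have h0 := hc0 _ hCE
      rw [Pi.add_apply, Pi.smul_apply, smul_eq_mul, hμ0c0, hvc0] at h0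
      linarith
  · -- no nonnegativity constraint is tight
    have hnt0 : ∀ c, ¬ tight0 U c := by rwa [not_exists] at hZ
    have hEx : ∃ (i : N) (ci di : C i), tight1 U i ci di ∧
        ¬∃ r : ℝ, vecI U i ci di = r • oneV := by
      by_contra h
      push_neg at h
      set f : ((∀ j, C j) → ℝ) →ₗ[ℝ] ℝ :=
        { toFun := fun v => ∑ c, v c
          map_add' := by
            intro a b
            rw [← Finset.sum_add_distrib]
            exact Finset.sum_congr rfl fun c _ => rfl
          map_smul' := by
            intro t a
            simp only [RingHom.id_apply, smul_eq_mul]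
            rw [Finset.mul_sum]
            exact Finset.sum_congr rfl fun c _ => by simp } with hf
      have hWker : Wsub U = LinearMap.ker f := by
        ext v
        constructor
        · rintro ⟨h1, _, _⟩
          exact LinearMap.mem_ker.2 h1
        · intro hv
          refine ⟨LinearMap.mem_ker.1 hv, fun c hc => absurd hc (hnt0 c), ?_⟩
          intro i ci di hti
          obtain ⟨r, hr⟩ := h i ci di hti
          rw [hr, dot_smul_left, dot_one_left]
          rw [show ∑ c, v c = 0 from LinearMap.mem_ker.1 hv]
          ring
      have hrange : LinearMap.range f = ⊤ := by
        rw [LinearMap.range_eq_top]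
        intro r
        refine ⟨r • dirac (Classical.arbitrary _), ?_⟩
        show ∑ c, (r • dirac (Classical.arbitrary (∀ j, C j))) c = r
        rw [show ∑ c, (r • dirac (Classical.arbitrary (∀ j, C j))) c
            = r * ∑ c, dirac (Classical.arbitrary (∀ j, C j)) c from by
          rw [Finset.mul_sum]; exact Finset.sum_congr rfl fun c _ => by simp, sum_dirac]
        ring
      have hrk := LinearMap.finrank_range_add_finrank_ker f
      rw [hrange, ← hWker, hWdim, finrank_top, finrank_self,
        Module.finrank_fintype_fun_eq_card] at hrk
      omega
    obtain ⟨i, ci, di, hte, hnotR⟩ := hEx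
    have hxy : ∃ x y, vecI U i ci di x ≠ vecI U i ci di y := by
      by_contra h
      push_neg at h
      apply hnotR
      refine ⟨vecI U i ci di (Classical.arbitrary _), funext fun x => ?_⟩
      rw [Pi.smul_apply, smul_eq_mul]
      unfold oneV
      rw [mul_one]
      exact h x (Classical.arbitrary _)
    obtain ⟨x, y, hxy⟩ := hxy
    have hvex : ∃ v : (∀ j, C j) → ℝ, (∑ c, v c) = 0 ∧ dot (vecI U i ci di) v < 0 := by
      have hsub : ∀ p q : (∀ j, C j), ∑ c, (dirac p - dirac q : (∀ j, C j) → ℝ) c = 0 := by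
        intro p q
        rw [show ∑ c, (dirac p - dirac q : (∀ j, C j) → ℝ) c
            = ∑ c, dirac p c - ∑ c, dirac q c from by
          rw [← Finset.sum_sub_distrib]; exact Finset.sum_congr rfl fun c _ => rfl,
          sum_dirac, sum_dirac]
        ring
      have hdd : ∀ p q : (∀ j, C j), dot (vecI U i ci di) (dirac p - dirac q)
          = vecI U i ci di p - vecI U i ci di q := by
        intro p q
        rw [dot_sub_right, dot_dirac_right, dot_dirac_right]
      rcases lt_trichotomy (vecI U i ci di x - vecI U i ci di y) 0 with h | h | h
      · exact ⟨dirac x - dirac y, hsub x y, by rw [hdd]; exact h⟩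
      · exact absurd (sub_eq_zero.1 h) hxy
      · exact ⟨dirac y - dirac x, hsub y x, by rw [hdd]; linarith⟩
    obtain ⟨v, hvsum, hvneg⟩ := hvex
    by_cases hF : ∃ (i' : N) (ci' di' : C i'), tight1 U i' ci' di' ∧
        0 < dot (vecI U i' ci' di') v
    · obtain ⟨i', ci', di', htf, hfpos⟩ := hF
      obtain ⟨a, b, g, hnt, heq⟩ := triple_dep _ hΦ2 honeΦ (hvΦ i ci di hte)
        (hvΦ i' ci' di' htf)
      have hg : g ≠ 0 := by
        intro hg0
        by_cases hbz : b = 0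
        · have e1 := congrFun heq (Classical.arbitrary _)
          simp only [Pi.add_apply, Pi.smul_apply, smul_eq_mul, Pi.zero_apply, oneV, hg0, hbz,
            zero_mul, add_zero, mul_one] at e1
          exact hnt ⟨e1, hbz, hg0⟩
        · apply hnotR
          refine ⟨-a/b, funext fun z => ?_⟩
          have e1 := congrFun heq z
          simp only [Pi.add_apply, Pi.smul_apply, smul_eq_mul, Pi.zero_apply, oneV, hg0,
            zero_mul, add_zero, mul_one] at e1
          rw [Pi.smul_apply, smul_eq_mul]
          unfold oneV
          rw [mul_one]
          field_simp
          linarith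
      have hdμ := congrArg (fun u => dot u μ0) heq
      simp only [dot_add_left, dot_smul_left, dot_zero_left, dot_one_left, hsum1] at hdμ
      rw [show dot (vecI U i ci di) μ0 = 0 from by
          rw [← incentiveSum_eq_dot]; exact hte μ0 hμ0,
        show dot (vecI U i' ci' di') μ0 = 0 from by
          rw [← incentiveSum_eq_dot]; exact htf μ0 hμ0] at hdμ
      have ha : a = 0 := by linarith
      have hβ : ∀ z, vecI U i' ci' di' z = (-b/g) * vecI U i ci di z := by
        intro z
        have e1 := congrFun heq z
        simp only [Pi.add_apply, Pi.smul_apply, smul_eq_mul, Pi.zero_apply, oneV, ha,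
          zero_mul, zero_add, mul_one] at e1
        field_simp
        linarith
      have hβ0 : -b/g ≠ 0 := by
        intro h0
        have hvf0 : dot (vecI U i' ci' di') v = 0 := by
          have : vecI U i' ci' di' = (0:ℝ) • vecI U i ci di := funext fun z => by
            rw [hβ z, h0]
            try simp
          rw [this, dot_smul_left]; ring
        linarith
      have hvene : di ≠ ci := by
        intro h
        rw [h, vecI_self, dot_zero_left] at hvneg
        exact lt_irrefl 0 hvneg
      have hvfne : di' ≠ ci' := by
        intro h
        rw [h, vecI_self, dot_zero_left] at hfpos
        exact lt_irrefl 0 hfpos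
      by_cases hii : i = i'
      · subst hii
        by_cases hcc : ci = ci'
        · subst hcc
          have hdd : di ≠ di' := by
            intro h
            rw [← h] at hfpos
            linarith
          obtain ⟨j, hji, hcj⟩ := hb i
          set x0 := Function.update (Classical.arbitrary (∀ j, C j)) i ci with hx0
          obtain ⟨s, hs⟩ := Fintype.exists_ne_of_one_lt_card (by omega) (x0 j)
          set y0 := Function.update x0 j s with hy0
          have hx0i : x0 i = ci := Function.update_self _ _ _
          have hy0i : y0 i = ci := by
            rw [hy0, Function.update_of_ne (Ne.symm hji), hx0i]
          have hxyj : y0 j ≠ x0 j := by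
            rw [hy0, Function.update_self]; exact hs
          have hvex0 : vecI U i ci di x0 = U i (Function.update x0 i di) - U i x0 := by
            unfold vecI; rw [if_pos hx0i]
          have hvey0 : vecI U i ci di y0 = U i (Function.update y0 i di) - U i y0 := by
            unfold vecI; rw [if_pos hy0i]
          have hvfx0 : vecI U i ci di' x0 = U i (Function.update x0 i di') - U i x0 := by
            unfold vecI; rw [if_pos hx0i]
          have hvfy0 : vecI U i ci di' y0 = U i (Function.update y0 i di') - U i y0 := by
            unfold vecI; rw [if_pos hy0i]
          right
          refine ⟨i, Function.update x0 i di, x0, Function.update y0 i di', y0,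
            Function.update y0 i di, Function.update x0 i di', ⟨?_, ?_, ?_, ?_, ?_, ?_, ?_, ?_⟩, ?_⟩
          · intro h
            have := congrFun h i
            rw [Function.update_self] at this
            exact hvene (by rw [this, hx0i])
          · intro h
            have := congrFun h i
            rw [Function.update_self] at this
            exact hvene (by rw [this, hy0i])
          · intro h
            have := congrFun h j
            rw [Function.update_of_ne hji, Function.update_of_ne hji] at this
            exact hxyj this.symm
          · intro h
            have := congrFun h i
            rw [Function.update_self, Function.update_self] at this
            exact hdd this
          · intro h
            have := congrFun h i
            rw [Function.update_self] at this
            exact hvfne (by rw [this, hx0i])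
          · intro h
            have := congrFun h i
            rw [Function.update_self] at this
            exact hvfne (by rw [this, hy0i])
          · intro h
            have := congrFun h i
            rw [Function.update_self, Function.update_self] at this
            exact hdd this.symm
          · intro h
            have := congrFun h j
            rw [Function.update_of_ne hji, Function.update_of_ne hji] at this
            exact hxyj this
          · rw [← hvex0, ← hvey0, ← hvfx0, ← hvfy0, hβ x0, hβ y0]
            ring
        · exfalso
          have hve0 : ∀ z, vecI U i ci di z = 0 := by
            intro z
            by_cases hz : z i = ci
            · have hzf : vecI U i ci' di' z = 0 := by
                unfold vecI
                rw [if_neg (fun hh => hcc (hz.symm.trans hh))]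
              have := hβ z
              rw [hzf] at this
              rcases mul_eq_zero.1 this.symm with h | h
              · exact absurd h hβ0
              · exact h
            · unfold vecI; rw [if_neg hz]
          have : dot (vecI U i ci di) v = 0 := by
            have : vecI U i ci di = (0 : (∀ j, C j) → ℝ) := funext fun z => hve0 z
            rw [this, dot_zero_left]
          linarith
      · -- i ≠ i'
        set x0 := Function.update (Function.update (Classical.arbitrary (∀ j, C j)) i ci) i' di'
          with hx0
        have hx0i : x0 i = ci := by
          rw [hx0, Function.update_of_ne hii, Function.update_self]
        have hx0i' : x0 i' = di' := Function.update_self _ _ _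
        have hvf0 : vecI U i' ci' di' x0 = 0 := by
          unfold vecI
          rw [if_neg (by rw [hx0i']; exact hvfne)]
        have hve0 : vecI U i ci di x0 = 0 := by
          have := hβ x0
          rw [hvf0] at this
          rcases mul_eq_zero.1 this.symm with h | h
          · exact absurd h hβ0
          · exact h
        have hval : U i (Function.update x0 i di) - U i x0 = 0 := by
          unfold vecI at hve0
          rwa [if_pos hx0i] at hve0
        left
        refine ⟨i, Function.update x0 i di, x0, ?_, by linarith⟩
        intro h
        have := congrFun h i
        rw [Function.update_self] at this
        exact hvene (by rw [this, hx0i])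
    · exfalso
      push_neg at hF
      obtain ⟨t, ht, hCE⟩ := pert hμ0 hs0 hi0 v hvsum
        (fun c hc => absurd hc (hnt0 c))
        (fun i' ci' di' h => hF i' ci' di' h)
      have h0 := hte _ hCE
      rw [incentiveSum_eq_dot, dot_add_right, dot_smul_right] at h0
      rw [show dot (vecI U i ci di) μ0 = 0 from by
        rw [← incentiveSum_eq_dot]; exact hte μ0 hμ0] at h0
      nlinarith

open MeasureTheory in
lemma SA_null : volume {v : (∀ j, C j) → ℝ | ∃ a b : ∀ j, C j, a ≠ b ∧ v a = v b} = 0 := by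
  classical
  have hrw : {v : (∀ j, C j) → ℝ | ∃ a b : ∀ j, C j, a ≠ b ∧ v a = v b}
      = ⋃ p : (∀ j, C j) × (∀ j, C j), {v | p.1 ≠ p.2 ∧ v p.1 = v p.2} := by
    ext v
    simp only [Set.mem_setOf_eq, Set.mem_iUnion]
    exact ⟨fun ⟨a, b, h1, h2⟩ => ⟨(a, b), h1, h2⟩, fun ⟨p, h1, h2⟩ => ⟨p.1, p.2, h1, h2⟩⟩
  rw [hrw]
  apply measure_iUnion_null
  rintro ⟨a, b⟩
  by_cases hab : a = b
  · have : {v : (∀ j, C j) → ℝ | a ≠ b ∧ v a = v b} = ∅ := by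
      ext v; simp [hab]
    rw [this]; simp
  · apply measure_mono_null (t := {v : (∀ j, C j) → ℝ | v a - v b = 0})
    · rintro v ⟨_, h⟩
      exact sub_eq_zero.2 h
    · apply func_null _ (MvPolynomial.X a - MvPolynomial.X b)
      · intro x; simp
      · refine ⟨dirac a, ?_⟩
        rw [dirac_self, dirac_apply_ne (Ne.symm hab)]
        norm_num

open MeasureTheory in
lemma SQ_null : volume {v : (∀ j, C j) → ℝ | ∃ a b c d e f : ∀ j, C j,
    (a ≠ b ∧ a ≠ d ∧ a ≠ e ∧ a ≠ f ∧ c ≠ b ∧ c ≠ d ∧ c ≠ e ∧ c ≠ f) ∧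
    (v a - v b) * (v c - v d) = (v e - v d) * (v f - v b)} = 0 := by
  classical
  have hrw : {v : (∀ j, C j) → ℝ | ∃ a b c d e f : ∀ j, C j,
      (a ≠ b ∧ a ≠ d ∧ a ≠ e ∧ a ≠ f ∧ c ≠ b ∧ c ≠ d ∧ c ≠ e ∧ c ≠ f) ∧
      (v a - v b) * (v c - v d) = (v e - v d) * (v f - v b)}
      = ⋃ p : (∀ j, C j) × (∀ j, C j) × (∀ j, C j) × (∀ j, C j) × (∀ j, C j) × (∀ j, C j),
        {v | (p.1 ≠ p.2.1 ∧ p.1 ≠ p.2.2.2.1 ∧ p.1 ≠ p.2.2.2.2.1 ∧ p.1 ≠ p.2.2.2.2.2 ∧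
              p.2.2.1 ≠ p.2.1 ∧ p.2.2.1 ≠ p.2.2.2.1 ∧ p.2.2.1 ≠ p.2.2.2.2.1 ∧
              p.2.2.1 ≠ p.2.2.2.2.2) ∧
          (v p.1 - v p.2.1) * (v p.2.2.1 - v p.2.2.2.1)
            = (v p.2.2.2.2.1 - v p.2.2.2.1) * (v p.2.2.2.2.2 - v p.2.1)} := by
    ext v
    simp only [Set.mem_setOf_eq, Set.mem_iUnion]
    constructor
    · rintro ⟨a, b, c, d, e, f, h1, h2⟩
      exact ⟨(a, b, c, d, e, f), h1, h2⟩
    · rintro ⟨⟨a, b, c, d, e, f⟩, h1, h2⟩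
      exact ⟨a, b, c, d, e, f, h1, h2⟩
  rw [hrw]
  apply measure_iUnion_null
  rintro ⟨a, b, c, d, e, f⟩
  by_cases hval : a ≠ b ∧ a ≠ d ∧ a ≠ e ∧ a ≠ f ∧ c ≠ b ∧ c ≠ d ∧ c ≠ e ∧ c ≠ f
  · apply measure_mono_null
      (t := {v : (∀ j, C j) → ℝ | (v a - v b) * (v c - v d) - (v e - v d) * (v f - v b) = 0})
    · rintro v ⟨_, h⟩
      simp only [Set.mem_setOf_eq]
      linarith
    · apply func_null _ ((MvPolynomial.X a - MvPolynomial.X b) *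
        (MvPolynomial.X c - MvPolynomial.X d) -
        (MvPolynomial.X e - MvPolynomial.X d) * (MvPolynomial.X f - MvPolynomial.X b))
      · intro x; simp
      · obtain ⟨h1, h2, h3, h4, h5, h6, h7, h8⟩ := hval
        refine ⟨fun z => if z = a ∨ z = c then 1 else 0, ?_⟩
        have hxa : (if a = a ∨ a = c then (1:ℝ) else 0) = 1 := by simp
        have hxc : (if c = a ∨ c = c then (1:ℝ) else 0) = 1 := by simp
        have hxb : (if b = a ∨ b = c then (1:ℝ) else 0) = 0 := by
          rw [if_neg]; rintro (h | h); exact h1 h.symm; exact h5 h.symm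
        have hxd : (if d = a ∨ d = c then (1:ℝ) else 0) = 0 := by
          rw [if_neg]; rintro (h | h); exact h2 h.symm; exact h6 h.symm
        have hxe : (if e = a ∨ e = c then (1:ℝ) else 0) = 0 := by
          rw [if_neg]; rintro (h | h); exact h3 h.symm; exact h7 h.symm
        have hxf : (if f = a ∨ f = c then (1:ℝ) else 0) = 0 := by
          rw [if_neg]; rintro (h | h); exact h4 h.symm; exact h8 h.symm
        simp only [hxa, hxb, hxc, hxd, hxe, hxf]
        norm_num
  · have : {v : (∀ j, C j) → ℝ | (a ≠ b ∧ a ≠ d ∧ a ≠ e ∧ a ≠ f ∧ c ≠ b ∧ c ≠ d ∧ c ≠ e ∧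
        c ≠ f) ∧ (v a - v b) * (v c - v d) = (v e - v d) * (v f - v b)} = ∅ := by
      ext v
      simp only [Set.mem_setOf_eq, Set.mem_empty_iff_false, iff_false]
      rintro ⟨h1, _⟩
      exact hval h1
    rw [this]; simp

end CEDim

open MeasureTheory CEDim in
theorem CEDim_final_aux
    (n : ℕ) (hn : 2 ≤ n) (m : Fin n → ℕ) (hm : ∀ i, 0 < m i)
    (hprod : ∀ i : Fin n, 2 ≤ ∏ j ∈ Finset.univ.erase i, m j) :
    MeasureTheory.volume
      {U : ∀ _ : Fin n, (∀ j : Fin n, Fin (m j)) → ℝ |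
        Module.finrank ℝ
            ↥(vectorSpan ℝ {μ : (∀ j : Fin n, Fin (m j)) → ℝ | IsCorrelatedEq U μ}) =
          (∏ j, m j) - 2} = 0 := by
  classical
  haveI : Nonempty (Fin n) := ⟨⟨0, by omega⟩⟩
  haveI : ∀ j : Fin n, Nonempty (Fin (m j)) := fun j => ⟨⟨0, hm j⟩⟩
  have hb : ∀ i : Fin n, ∃ j, j ≠ i ∧ 2 ≤ Fintype.card (Fin (m j)) := by
    intro i
    by_contra h
    push_neg at h
    have hle : ∀ j ∈ Finset.univ.erase i, m j ≤ 1 := by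
      intro j hj
      have hji : j ≠ i := (Finset.mem_erase.1 hj).1
      have := h j hji
      rw [Fintype.card_fin] at this
      omega
    have := Finset.prod_le_one (fun j (_ : j ∈ Finset.univ.erase i) => Nat.zero_le (m j)) hle
    have h2 := hprod i
    omega
  have hcard : Fintype.card (∀ j : Fin n, Fin (m j)) = ∏ j, m j := by
    rw [Fintype.card_pi]
    exact Finset.prod_congr rfl fun j _ => Fintype.card_fin (m j)
  apply measure_mono_null
    (t := (⋃ i : Fin n, {U : ∀ _ : Fin n, (∀ j : Fin n, Fin (m j)) → ℝ |
        U i ∈ {v : (∀ j : Fin n, Fin (m j)) → ℝ | ∃ a b, a ≠ b ∧ v a = v b}}) ∪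
      (⋃ i : Fin n, {U : ∀ _ : Fin n, (∀ j : Fin n, Fin (m j)) → ℝ |
        U i ∈ {v : (∀ j : Fin n, Fin (m j)) → ℝ | ∃ a b c d e f,
          (a ≠ b ∧ a ≠ d ∧ a ≠ e ∧ a ≠ f ∧ c ≠ b ∧ c ≠ d ∧ c ≠ e ∧ c ≠ f) ∧
          (v a - v b) * (v c - v d) = (v e - v d) * (v f - v b)}}))
  · intro U hU
    have hdim : Module.finrank ℝ
        (vectorSpan ℝ {μ : (∀ j : Fin n, Fin (m j)) → ℝ | IsCorrelatedEq U μ})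
        = Fintype.card (∀ j : Fin n, Fin (m j)) - 2 := by
      rw [hcard]; exact hU
    rcases main_cover hb hdim with ⟨i, a, b, h1, h2⟩ | ⟨i, a, b, c, d, e, f, h1, h2⟩
    · exact Or.inl (Set.mem_iUnion.2 ⟨i, a, b, h1, h2⟩)
    · exact Or.inr (Set.mem_iUnion.2 ⟨i, a, b, c, d, e, f, h1, h2⟩)
  · apply measure_union_null
    · exact measure_iUnion_null fun i => cylinder_null i _ SA_null
    · exact measure_iUnion_null fun i => cylinder_null i _ SQ_null

/-- In a generic finite game in which at least two players have at least two pure strategies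
(in the aggregate sense `∏_{j≠i} m_j ≥ 2` for all `i`), the correlated equilibrium polytope
does not have affine dimension `|C| - 2`: the set of such games has Lebesgue measure zero. -/
theorem corrEq_polytope_dimension_not_card_sub_two
    (n : ℕ) (hn : 2 ≤ n) (m : Fin n → ℕ) (hm : ∀ i, 0 < m i)
    (hprod : ∀ i : Fin n, 2 ≤ ∏ j ∈ Finset.univ.erase i, m j) :
    MeasureTheory.volume
      {U : ∀ _ : Fin n, (∀ j : Fin n, Fin (m j)) → ℝ |
        Module.finrank ℝ
            ↥(vectorSpan ℝ {μ : (∀ j : Fin n, Fin (m j)) → ℝ | IsCorrelatedEq U μ}) =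
          (∏ j, m j) - 2} = 0 :=
  CEDim_final_aux n hn m hm hprod
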